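/- Let g ≥ 2, r ≥ 2 and N ≥ 1. There exists a group homomorphism ρ : Γ_g → GL_r(ℂ) such that the trace of ρ(a_1)^N ρ(b_1)^N ρ(a_1)^{−N} ρ(b_1)^{−N} is not equal to r. -/

import Mathlib

open scoped commutatorElement

/-- The surface relation `[a₁,b₁][a₂,b₂]⋯[a_g,b_g]` in the free group on generators
`a_1,…,a_g` (indexed by `Sum.inl`) and `b_1,…,b_g` (indexed by `Sum.inr`). -/
def surfaceRel (g : ℕ) : FreeGroup (Fin g ⊕ Fin g) :=
  (List.ofFn fun i : Fin g =>
    ⁅FreeGroup.of (Sum.inl i : Fin g ⊕ Fin g), FreeGroup.of (Sum.inr i)⁆).prod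

/-- The genus-`g` surface group `Γ_g`, presented by generators `a_1,…,a_g,b_1,…,b_g` and the
single relation `[a₁,b₁]⋯[a_g,b_g] = 1`. -/
abbrev SurfaceGroup (g : ℕ) : Type :=
  PresentedGroup ({surfaceRel g} : Set (FreeGroup (Fin g ⊕ Fin g)))

section Aux

open Matrix

/-- The diagonal unit `diag(2,1)` in `GL₂(ℂ)`. -/
noncomputable def Dunit : GL (Fin 2) ℂ :=
  ⟨Matrix.diagonal ![2, 1], Matrix.diagonal ![2⁻¹, 1],
    by
      ext i j; fin_cases i <;> fin_cases j <;>
        simp [Matrix.mul_apply, Matrix.diagonal, Fin.sum_univ_two] <;> norm_num,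
    by
      ext i j; fin_cases i <;> fin_cases j <;>
        simp [Matrix.mul_apply, Matrix.diagonal, Fin.sum_univ_two] <;> norm_num⟩

/-- The unit `S = !![1,1;1,2]` in `GL₂(ℂ)`. -/
def Sunit : GL (Fin 2) ℂ :=
  ⟨!![1, 1; 1, 2], !![2, -1; -1, 1],
    by ext i j; fin_cases i <;> fin_cases j <;>
        simp [Matrix.mul_apply, Fin.sum_univ_two] <;> norm_num,
    by ext i j; fin_cases i <;> fin_cases j <;>
        simp [Matrix.mul_apply, Fin.sum_univ_two] <;> norm_num⟩

lemma pow_vec (t : ℂ) (N : ℕ) : (![t, 1] : Fin 2 → ℂ) ^ N = ![t ^ N, 1] := by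
  funext i; fin_cases i <;> simp [Pi.pow_apply]

lemma Dunit_pow_val (N : ℕ) : ((Dunit ^ N : GL (Fin 2) ℂ) : Matrix (Fin 2) (Fin 2) ℂ)
    = Matrix.diagonal ![(2 : ℂ) ^ N, 1] := by
  rw [Units.val_pow_eq_pow_val]
  show (Matrix.diagonal ![(2:ℂ), 1]) ^ N = _
  rw [Matrix.diagonal_pow, pow_vec]

lemma Dunit_inv_pow_val (N : ℕ) : (((Dunit ^ N)⁻¹ : GL (Fin 2) ℂ) : Matrix (Fin 2) (Fin 2) ℂ)
    = Matrix.diagonal ![((2 : ℂ) ^ N)⁻¹, 1] := by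
  rw [← inv_pow, Units.val_pow_eq_pow_val]
  show (Matrix.diagonal ![(2:ℂ)⁻¹, 1]) ^ N = _
  rw [Matrix.diagonal_pow, pow_vec, inv_pow]

/-- Block-diagonal embedding of `GL₂` into `GL_{2+k}` as a monoid hom on matrices. -/
def blockHom (k : ℕ) : Matrix (Fin 2) (Fin 2) ℂ →* Matrix (Fin (2 + k)) (Fin (2 + k)) ℂ where
  toFun M := Matrix.reindex finSumFinEquiv finSumFinEquiv
    (Matrix.fromBlocks M 0 0 (1 : Matrix (Fin k) (Fin k) ℂ))
  map_one' := by
    rw [Matrix.fromBlocks_one]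
    simp
  map_mul' X Y := by
    have : Matrix.fromBlocks (X * Y) 0 0 (1 : Matrix (Fin k) (Fin k) ℂ)
        = Matrix.fromBlocks X 0 0 1 * Matrix.fromBlocks Y 0 0 1 := by
      rw [Matrix.fromBlocks_multiply]; simp
    rw [this]
    simp [Matrix.reindex_apply, Matrix.submatrix_mul_equiv]

lemma trace_blockHom (k : ℕ) (M : Matrix (Fin 2) (Fin 2) ℂ) :
    Matrix.trace (blockHom k M) = Matrix.trace M + k := by
  have h1 : Matrix.trace (blockHom k M)
      = Matrix.trace (Matrix.fromBlocks M 0 0 (1 : Matrix (Fin k) (Fin k) ℂ)) := by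
    simp only [blockHom, MonoidHom.coe_mk, OneHom.coe_mk, Matrix.reindex_apply, Matrix.trace,
      Matrix.diag, Matrix.submatrix_apply]
    exact Fintype.sum_equiv finSumFinEquiv.symm _ _ (fun i => rfl)
  rw [h1]
  simp only [Matrix.trace, Matrix.diag, Fintype.sum_sum_type]
  simp [Matrix.fromBlocks]

end Aux

/-- For `g ≥ 2`, `r ≥ 2` and `N ≥ 1`, there is a representation `ρ : Γ_g → GL_r(ℂ)` with
`tr(ρ(a₁)^N ρ(b₁)^N ρ(a₁)^{−N} ρ(b₁)^{−N}) ≠ r`; i.e. the regular function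
`tr([ρ(a₁)^N, ρ(b₁)^N]) − r` is not identically zero on the representation variety. -/
theorem exists_rep_trace_commutator_pow_ne (g r N : ℕ) (hg : 2 ≤ g) (hr : 2 ≤ r)
    (hN : 1 ≤ N) :
    ∃ ρ : SurfaceGroup g →* GL (Fin r) ℂ,
      ∀ a b : SurfaceGroup g,
        a = PresentedGroup.of (Sum.inl (⟨0, by omega⟩ : Fin g)) →
        b = PresentedGroup.of (Sum.inr (⟨0, by omega⟩ : Fin g)) →
        Matrix.trace
          ((ρ a ^ N * ρ b ^ N * (ρ a ^ N)⁻¹ * (ρ b ^ N)⁻¹ : GL (Fin r) ℂ) :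
            Matrix (Fin r) (Fin r) ℂ) ≠ (r : ℂ) := by
  obtain ⟨k, rfl⟩ : ∃ k, r = 2 + k := ⟨r - 2, by omega⟩
  -- the embedding GL₂ → GL_{2+k}
  let φ : GL (Fin 2) ℂ →* GL (Fin (2 + k)) ℂ := Units.map (blockHom k)
  -- images of the two basic matrices
  let A : GL (Fin (2 + k)) ℂ := φ Dunit
  let B : GL (Fin (2 + k)) ℂ := φ (Sunit * Dunit * Sunit⁻¹)
  -- the generator assignment
  let F : Fin g ⊕ Fin g → GL (Fin (2 + k)) ℂ :=
    Sum.elim (fun i => if i.val = 0 then A else if i.val = 1 then B else 1)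
      (fun i => if i.val = 0 then B else if i.val = 1 then A else 1)
  have hrel : ∀ w ∈ ({surfaceRel g} : Set (FreeGroup (Fin g ⊕ Fin g))),
      FreeGroup.lift F w = 1 := by
    intro w hw
    rw [Set.mem_singleton_iff] at hw
    subst hw
    obtain ⟨m, rfl⟩ : ∃ m, g = m + 2 := ⟨g - 2, by omega⟩
    rw [surfaceRel, map_list_prod, List.map_ofFn]
    have hfn : ∀ i : Fin (m + 2),
        ((FreeGroup.lift F) ∘ fun i : Fin (m + 2) =>
          ⁅FreeGroup.of (Sum.inl i : Fin (m+2) ⊕ Fin (m+2)), FreeGroup.of (Sum.inr i)⁆) i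
        = ⁅F (Sum.inl i), F (Sum.inr i)⁆ := by
      intro i
      simp [map_commutatorElement]
    rw [show (⇑(FreeGroup.lift F) ∘ fun i : Fin (m + 2) =>
        ⁅FreeGroup.of (Sum.inl i : Fin (m+2) ⊕ Fin (m+2)), FreeGroup.of (Sum.inr i)⁆)
        = fun i => ⁅F (Sum.inl i), F (Sum.inr i)⁆ from funext hfn]
    rw [List.ofFn_succ, List.ofFn_succ]
    have h0 : F (Sum.inl (0 : Fin (m + 2))) = A := by simp [F]
    have h0' : F (Sum.inr (0 : Fin (m + 2))) = B := by simp [F]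
    have h1 : F (Sum.inl ((0 : Fin (m + 1)).succ)) = B := by simp [F]
    have h1' : F (Sum.inr ((0 : Fin (m + 1)).succ)) = A := by simp [F]
    have hrest : ∀ i : Fin m,
        ⁅F (Sum.inl (i.succ.succ : Fin (m + 2))), F (Sum.inr i.succ.succ)⁆ = 1 := by
      intro i
      have : (i.succ.succ : Fin (m + 2)).val = i.val + 2 := rfl
      simp only [F, Sum.elim_inl, Sum.elim_inr, this]
      rw [if_neg (by omega), if_neg (by omega), if_neg (by omega), if_neg (by omega)]
      simp
    simp only [List.prod_cons, h0, h0', h1, h1']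
    have : (List.ofFn fun i : Fin m =>
        ⁅F (Sum.inl (i.succ.succ : Fin (m + 2))), F (Sum.inr i.succ.succ)⁆).prod = 1 := by
      apply List.prod_eq_one
      intro x hx
      rw [List.mem_ofFn] at hx
      obtain ⟨i, rfl⟩ := hx
      exact hrest i
    rw [this, mul_one, ← commutatorElement_inv, inv_mul_cancel]
  refine ⟨PresentedGroup.toGroup hrel, ?_⟩
  intro a b ha hb
  subst ha hb
  rw [PresentedGroup.toGroup.of, PresentedGroup.toGroup.of]
  have hFa : F (Sum.inl (⟨0, by omega⟩ : Fin g)) = A := by simp [F]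
  have hFb : F (Sum.inr (⟨0, by omega⟩ : Fin g)) = B := by simp [F]
  rw [hFa, hFb]
  -- reduce to the 2×2 computation
  set t : ℂ := (2 : ℂ) ^ N with ht
  have ht0 : t ≠ 0 := pow_ne_zero N two_ne_zero
  have ht1 : t ≠ 1 := by
    rw [ht]
    intro h
    have h' : ((2 ^ N : ℕ) : ℂ) = ((1 : ℕ) : ℂ) := by push_cast; simpa using h
    have h'' : (2 : ℕ) ^ N = 1 := Nat.cast_inj.mp h'
    have h2 : 2 ^ N ≥ 2 ^ 1 := Nat.pow_le_pow_right (by norm_num) hN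
    omega
  -- the 2×2 commutator
  have hAN : (A ^ N : GL (Fin (2+k)) ℂ) = φ (Dunit ^ N) := by simp [A, map_pow]
  have hBN : (B ^ N : GL (Fin (2+k)) ℂ) = φ (Sunit * Dunit ^ N * Sunit⁻¹) := by
    simp [B, map_pow, conj_pow]
  have key : A ^ N * B ^ N * (A ^ N)⁻¹ * (B ^ N)⁻¹
      = φ (Dunit ^ N * (Sunit * Dunit ^ N * Sunit⁻¹) * (Dunit ^ N)⁻¹
          * (Sunit * (Dunit ^ N)⁻¹ * Sunit⁻¹)) := by
    rw [hAN, hBN, ← map_inv, ← map_inv, ← map_mul, ← map_mul, ← map_mul]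
    congr 2
    simp [mul_assoc]
  rw [key]
  -- coerce to matrices
  have hcoe : ((φ (Dunit ^ N * (Sunit * Dunit ^ N * Sunit⁻¹) * (Dunit ^ N)⁻¹
          * (Sunit * (Dunit ^ N)⁻¹ * Sunit⁻¹)) : GL (Fin (2+k)) ℂ) : Matrix _ _ ℂ)
      = blockHom k ((Dunit ^ N * (Sunit * Dunit ^ N * Sunit⁻¹) * (Dunit ^ N)⁻¹
          * (Sunit * (Dunit ^ N)⁻¹ * Sunit⁻¹) : GL (Fin 2) ℂ) : Matrix _ _ ℂ) := rfl
  rw [hcoe, trace_blockHom]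
  -- the 2×2 matrix
  have hSval : ((Sunit : GL (Fin 2) ℂ) : Matrix (Fin 2) (Fin 2) ℂ) = !![1,1;1,2] := rfl
  have hSival : ((Sunit⁻¹ : GL (Fin 2) ℂ) : Matrix (Fin 2) (Fin 2) ℂ) = !![2,-1;-1,1] := rfl
  have hM : ((Dunit ^ N * (Sunit * Dunit ^ N * Sunit⁻¹) * (Dunit ^ N)⁻¹
          * (Sunit * (Dunit ^ N)⁻¹ * Sunit⁻¹) : GL (Fin 2) ℂ) : Matrix (Fin 2) (Fin 2) ℂ)
      = Matrix.diagonal ![t, 1] * (!![1,1;1,2] * Matrix.diagonal ![t, 1] * !![2,-1;-1,1])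
        * Matrix.diagonal ![t⁻¹, 1] * (!![1,1;1,2] * Matrix.diagonal ![t⁻¹, 1] * !![2,-1;-1,1]) := by
    rw [ht]
    simp only [Units.val_mul, Dunit_pow_val, Dunit_inv_pow_val, hSval, hSival]
  rw [hM]
  -- compute the trace explicitly
  have hdiag : (Matrix.diagonal ![t, 1] : Matrix (Fin 2) (Fin 2) ℂ) = !![t,0;0,1] := by
    ext i j; fin_cases i <;> fin_cases j <;> simp [Matrix.diagonal]
  have hdiag' : (Matrix.diagonal ![t⁻¹, 1] : Matrix (Fin 2) (Fin 2) ℂ) = !![t⁻¹,0;0,1] := by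
    ext i j; fin_cases i <;> fin_cases j <;> simp [Matrix.diagonal]
  rw [hdiag, hdiag']
  simp only [Matrix.mul_fin_two]
  rw [Matrix.trace_fin_two_of]
  intro hEq
  push_cast at hEq
  field_simp at hEq
  have h2 : 2 * ((2:ℂ)^N)^2 * ((2:ℂ)^N - 1)^4 = 0 := by
    rw [ht] at hEq; linear_combination ((2:ℂ)^N)^2 * hEq
  have ht0' : (2:ℂ)^N ≠ 0 := pow_ne_zero N two_ne_zero
  have hne2 : (2:ℂ) * ((2:ℂ)^N)^2 ≠ 0 := mul_ne_zero two_ne_zero (pow_ne_zero _ ht0')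
  have h3 : ((2:ℂ)^N - 1)^4 = 0 := by
    rcases mul_eq_zero.mp (show ((2:ℂ) * ((2:ℂ)^N)^2) * ((2:ℂ)^N - 1)^4 = 0 by
      linear_combination h2) with h | h
    · exact absurd h hne2
    · exact h
  have h4 : (2:ℂ)^N - 1 = 0 := pow_eq_zero_iff (by norm_num : (4:ℕ) ≠ 0) |>.mp h3
  exact ht1 (by rw [ht]; linear_combination h4)
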